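/- The number of Latin squares of order n satisfies L(n) ≤ 2^{(n-1)^2} · n^{lcs(n)}, where lcs(n) is the maximum size of a critical set in any Latin square of order n. -/
import Mathlib

open Real

def IsLatinSquare {n : ℕ} (L : Fin n → Fin n → Fin n) : Prop :=
  (∀ i, Function.Bijective (L i)) ∧ (∀ j, Function.Bijective fun i => L i j)

def IsPartialLatinSquare {n : ℕ} (P : Fin n → Fin n → Option (Fin n)) : Prop :=
  (∀ i j j' k, P i j = some k → P i j' = some k → j = j') ∧
  (∀ i i' j k, P i j = some k → P i' j = some k → i = i')

def ExtendsPLS {n : ℕ} (L : Fin n → Fin n → Fin n) (P : Fin n → Fin n → Option (Fin n)) : Prop :=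
  ∀ i j k, P i j = some k → L i j = k

def UniquelyCompletableTo {n : ℕ} (P : Fin n → Fin n → Option (Fin n))
    (L : Fin n → Fin n → Fin n) : Prop :=
  IsLatinSquare L ∧ ExtendsPLS L P ∧ ∀ L', IsLatinSquare L' → ExtendsPLS L' P → L' = L

def SubPLS {n : ℕ} (Q P : Fin n → Fin n → Option (Fin n)) : Prop :=
  ∀ i j k, Q i j = some k → P i j = some k

def IsCriticalSet {n : ℕ} (C : Fin n → Fin n → Option (Fin n))
    (L : Fin n → Fin n → Fin n) : Prop :=
  IsPartialLatinSquare C ∧ UniquelyCompletableTo C L ∧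
  ∀ Q, SubPLS Q C → Q ≠ C → ¬ UniquelyCompletableTo Q L

def plsSize {n : ℕ} (P : Fin n → Fin n → Option (Fin n)) : ℕ :=
  (Finset.univ.filter fun p : Fin n × Fin n => (P p.1 p.2).isSome).card

noncomputable def numLatin (n : ℕ) : ℕ := Nat.card {L : Fin n → Fin n → Fin n // IsLatinSquare L}

noncomputable def lcs (n : ℕ) : ℕ :=
  sSup {m | ∃ (L : Fin n → Fin n → Fin n) (C : Fin n → Fin n → Option (Fin n)),
    IsLatinSquare L ∧ IsCriticalSet C L ∧ plsSize C = m}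

/-- Two bijections of `Fin n` agreeing off a point agree everywhere. -/
lemma bij_agree {n : ℕ} {f g : Fin n → Fin n} (hf : Function.Bijective f)
    (hg : Function.Bijective g) (x₀ : Fin n) (h : ∀ x, x ≠ x₀ → f x = g x) : f = g := by
  funext x
  by_cases hx : x = x₀
  · subst hx
    obtain ⟨y, hy⟩ := hg.2 (f x)
    by_cases hyx : y = x
    · subst hyx; exact hy.symm
    · exact absurd (hf.1 ((h y hyx).trans hy)) hyx
  · exact h x hx

def rowColPLS {n : ℕ} (L : Fin n → Fin n → Fin n) : Fin n → Fin n → Option (Fin n) :=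
  fun i j => if i.val = 0 ∨ j.val = 0 then none else some (L i j)

lemma rowColPLS_uc {n : ℕ} (L : Fin n → Fin n → Fin n) (hL : IsLatinSquare L) :
    UniquelyCompletableTo (rowColPLS L) L := by
  refine ⟨hL, ?_, ?_⟩
  · intro i j k h
    unfold rowColPLS at h
    split_ifs at h
    exact Option.some_injective _ h
  · intro L' hL' hext
    have step1 : ∀ i : Fin n, i.val ≠ 0 → ∀ j, L' i j = L i j := by
      intro i hi
      have := bij_agree (hL'.1 i) (hL.1 i) ⟨0, i.pos⟩ (fun j hj => by
        apply hext
        unfold rowColPLS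
        rw [if_neg]
        push_neg
        exact ⟨hi, fun h0 => hj (Fin.ext h0)⟩)
      exact fun j => congrFun this j
    funext i j
    have := bij_agree (hL'.2 j) (hL.2 j) ⟨0, i.pos⟩ (fun i' hi' =>
      step1 i' (fun h0 => hi' (Fin.ext h0)) j)
    exact congrFun this i

lemma extends_isPLS {n : ℕ} {L : Fin n → Fin n → Fin n} {C : Fin n → Fin n → Option (Fin n)}
    (hL : IsLatinSquare L) (h : ExtendsPLS L C) : IsPartialLatinSquare C := by
  constructor
  · intro i j j' k hj hj'
    exact (hL.1 i).1 (((h i j k hj).trans (h i j' k hj').symm))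
  · intro i i' j k hi hi'
    exact (hL.2 j).1 (((h i j k hi).trans (h i' j k hi').symm))

lemma size_lt {n : ℕ} {Q P : Fin n → Fin n → Option (Fin n)} (hsub : SubPLS Q P)
    (hne : Q ≠ P) : plsSize Q < plsSize P := by
  apply Finset.card_lt_card
  constructor
  · intro p hp
    simp only [Finset.mem_filter, Finset.mem_univ, true_and, Option.isSome_iff_exists] at hp ⊢
    obtain ⟨k, hk⟩ := hp
    exact ⟨k, hsub p.1 p.2 k hk⟩
  · intro hPQ
    apply hne
    funext i j
    cases hQ : Q i j with
    | some k => exact (hQ.trans (hsub i j k hQ).symm).symm ▸ (hsub i j k hQ).symm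
    | none =>
      cases hP : P i j with
      | none => rfl
      | some k =>
        have : (i, j) ∈ Finset.univ.filter fun p : Fin n × Fin n => (Q p.1 p.2).isSome := by
          apply hPQ
          simp [hP]
        simp [hQ] at this

lemma exists_critical {n : ℕ} (L : Fin n → Fin n → Fin n) (hL : IsLatinSquare L) :
    ∀ N (P : Fin n → Fin n → Option (Fin n)), plsSize P ≤ N → UniquelyCompletableTo P L →
    ∃ C, SubPLS C P ∧ IsCriticalSet C L := by
  intro N
  induction N with
  | zero =>
    intro P hsize hUC
    by_cases hcrit : ∀ Q, SubPLS Q P → Q ≠ P → ¬ UniquelyCompletableTo Q L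
    · exact ⟨P, fun _ _ _ h => h, extends_isPLS hL hUC.2.1, hUC, hcrit⟩
    · push_neg at hcrit
      obtain ⟨Q, hsub, hne, _⟩ := hcrit
      exact absurd (size_lt hsub hne) (by omega)
  | succ N ih =>
    intro P hsize hUC
    by_cases hcrit : ∀ Q, SubPLS Q P → Q ≠ P → ¬ UniquelyCompletableTo Q L
    · exact ⟨P, fun _ _ _ h => h, extends_isPLS hL hUC.2.1, hUC, hcrit⟩
    · push_neg at hcrit
      obtain ⟨Q, hsub, hne, hQUC⟩ := hcrit
      have hlt := size_lt hsub hne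
      obtain ⟨C, hCsub, hCcrit⟩ := ih Q (by omega) hQUC
      exact ⟨C, fun i j k h => hsub i j k (hCsub i j k h), hCcrit⟩

lemma plsSize_le {n : ℕ} (P : Fin n → Fin n → Option (Fin n)) : plsSize P ≤ n * n := by
  unfold plsSize
  calc (Finset.univ.filter fun p : Fin n × Fin n => (P p.1 p.2).isSome).card
      ≤ (Finset.univ : Finset (Fin n × Fin n)).card := Finset.card_filter_le _ _
    _ = n * n := by simp

lemma le_lcs {n : ℕ} {L : Fin n → Fin n → Fin n} {C : Fin n → Fin n → Option (Fin n)}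
    (hL : IsLatinSquare L) (hC : IsCriticalSet C L) : plsSize C ≤ lcs n := by
  apply le_csSup
  · refine ⟨n * n, ?_⟩
    rintro m ⟨L', C', _, _, rfl⟩
    exact plsSize_le C'
  · exact ⟨L, C, hL, hC, rfl⟩


def cellsOf {n : ℕ} (P : Fin n → Fin n → Option (Fin n)) : Finset (Fin n × Fin n) :=
  Finset.univ.filter fun p : Fin n × Fin n => (P p.1 p.2).isSome

lemma length_toList_cellsOf {n : ℕ} (P : Fin n → Fin n → Option (Fin n)) :
    (cellsOf P).toList.length = plsSize P := by
  simp [cellsOf, plsSize, Finset.length_toList]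

noncomputable def encode {n : ℕ} (hn : 0 < n) (m : ℕ) (P : Fin n → Fin n → Option (Fin n)) :
    (Fin (n-1) → Fin (n-1) → Bool) × (Fin m → Fin n) :=
  (fun a b => (P ⟨a.1+1, by have := a.isLt; omega⟩ ⟨b.1+1, by have := b.isLt; omega⟩).isSome,
   fun k => if h : k.1 < (cellsOf P).toList.length then
       (P ((cellsOf P).toList.get ⟨k.1, h⟩).1 ((cellsOf P).toList.get ⟨k.1, h⟩).2).getD ⟨0, hn⟩
     else ⟨0, hn⟩)

lemma sub_rowCol_none {n : ℕ} {L : Fin n → Fin n → Fin n} {C : Fin n → Fin n → Option (Fin n)}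
    (hC : SubPLS C (rowColPLS L)) {i j : Fin n} (hij : i.val = 0 ∨ j.val = 0) : C i j = none := by
  cases hc : C i j with
  | none => rfl
  | some k =>
    have := hC i j k hc
    unfold rowColPLS at this
    rw [if_pos hij] at this
    exact absurd this (by simp)

lemma encode_inj {n m : ℕ} (hn : 0 < n) {L₁ L₂ : Fin n → Fin n → Fin n}
    {C₁ C₂ : Fin n → Fin n → Option (Fin n)}
    (h₁ : SubPLS C₁ (rowColPLS L₁)) (h₂ : SubPLS C₂ (rowColPLS L₂))
    (hs₁ : plsSize C₁ ≤ m)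
    (h : encode hn m C₁ = encode hn m C₂) : C₁ = C₂ := by
  have hsome : ∀ i j : Fin n, (C₁ i j).isSome = (C₂ i j).isSome := by
    intro i j
    by_cases hij : i.val = 0 ∨ j.val = 0
    · rw [sub_rowCol_none h₁ hij, sub_rowCol_none h₂ hij]
    · push_neg at hij
      have hilt := i.isLt
      have hjlt := j.isLt
      have ha : i.val - 1 < n - 1 := by omega
      have hb : j.val - 1 < n - 1 := by omega
      have key := congrFun (congrFun (congrArg Prod.fst h) ⟨i.val - 1, ha⟩) ⟨j.val - 1, hb⟩
      simp only [encode] at key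
      have e1 : i = (⟨i.val - 1 + 1, by omega⟩ : Fin n) := Fin.ext (by simp; omega)
      have e2 : j = (⟨j.val - 1 + 1, by omega⟩ : Fin n) := Fin.ext (by simp; omega)
      rw [← e1, ← e2] at key
      exact key
  have hcells : cellsOf C₁ = cellsOf C₂ := by
    apply Finset.ext
    intro p
    simp only [cellsOf, Finset.mem_filter, Finset.mem_univ, true_and, hsome p.1 p.2]
  funext i j
  have hiso := hsome i j
  cases hc1 : C₁ i j with
  | none =>
    cases hc2 : C₂ i j with
    | none => rfl
    | some k => rw [hc1, hc2] at hiso; simp at hiso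
  | some k₁ =>
    cases hc2 : C₂ i j with
    | none => rw [hc1, hc2] at hiso; simp at hiso
    | some k₂ =>
      have hpmem : (i, j) ∈ (cellsOf C₁).toList := by
        rw [Finset.mem_toList]
        simp [cellsOf, hc1]
      set l := (cellsOf C₁).toList with hl
      have hlen : l.length = plsSize C₁ := length_toList_cellsOf C₁
      obtain ⟨t, hget⟩ := List.mem_iff_get.1 hpmem
      have hkm : t.val < m := lt_of_lt_of_le (hlen ▸ t.isLt) hs₁
      have key := congrFun (congrArg Prod.snd h) ⟨t.val, hkm⟩
      simp only [encode] at key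
      rw [← hcells, ← hl] at key
      rw [dif_pos t.isLt, dif_pos t.isLt] at key
      rw [show (⟨t.val, t.isLt⟩ : Fin l.length) = t from rfl, hget] at key
      simp only [hc1, hc2, Option.getD_some] at key
      rw [key]

set_option synthInstance.maxHeartbeats 1000000 in
set_option maxHeartbeats 1000000 in
theorem stmt3 (n : ℕ) :
    numLatin n ≤ 2 ^ ((n - 1) ^ 2) * n ^ (lcs n) := by
  classical
  rcases Nat.eq_zero_or_pos n with hn | hn
  · subst hn
    have hmem : (0:ℕ) ∈ {m | ∃ (L : Fin 0 → Fin 0 → Fin 0) (C : Fin 0 → Fin 0 → Option (Fin 0)),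
        IsLatinSquare L ∧ IsCriticalSet C L ∧ plsSize C = m} := by
      refine ⟨fun i => i.elim0, fun _ _ => none, ⟨fun i => i.elim0, fun j => j.elim0⟩, ?_, ?_⟩
      · refine ⟨⟨fun i => i.elim0, fun i => i.elim0⟩,
          ⟨⟨fun i => i.elim0, fun j => j.elim0⟩, fun i => i.elim0,
            fun L' _ _ => funext fun i => i.elim0⟩, ?_⟩
        intro Q hsub hne _
        exact hne (funext fun i => i.elim0)
      · simp [plsSize]
    have hlcs : lcs 0 = 0 := by
      apply Nat.le_antisymm _ (Nat.zero_le _)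
      apply csSup_le ⟨0, hmem⟩
      rintro m ⟨L', C', _, _, rfl⟩
      simpa using plsSize_le C'
    rw [hlcs]
    norm_num
    calc numLatin 0 ≤ Nat.card (Fin 0 → Fin 0 → Fin 0) :=
          Nat.card_le_card_of_injective _ Subtype.val_injective
      _ = 1 := by simp [Nat.card_eq_fintype_card]
  · have hCex : ∀ L : {L : Fin n → Fin n → Fin n // IsLatinSquare L},
        ∃ C, SubPLS C (rowColPLS L.1) ∧ IsCriticalSet C L.1 :=
      fun L => exists_critical L.1 L.2 (plsSize (rowColPLS L.1)) _ le_rfl (rowColPLS_uc L.1 L.2)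
    choose C hsub hcrit using hCex
    have hle : ∀ L, plsSize (C L) ≤ lcs n := fun L => le_lcs L.2 (hcrit L)
    have hinj : Function.Injective (fun L => encode hn (lcs n) (C L)) := by
      intro L₁ L₂ hF
      have hCeq : C L₁ = C L₂ :=
        encode_inj hn (hsub L₁) (hsub L₂) (hle L₁) hF
      have hext : ExtendsPLS L₂.1 (C L₁) := by
        rw [hCeq]; exact (hcrit L₂).2.1.2.1
      exact (Subtype.ext ((hcrit L₁).2.1.2.2 L₂.1 L₂.2 hext)).symm
    have hfin : Finite ((Fin (n-1) → Fin (n-1) → Bool) × (Fin (lcs n) → Fin n)) := by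
      infer_instance
    calc numLatin n ≤ Nat.card ((Fin (n-1) → Fin (n-1) → Bool) × (Fin (lcs n) → Fin n)) :=
          Nat.card_le_card_of_injective _ hinj
      _ = 2 ^ ((n - 1) ^ 2) * n ^ (lcs n) := by
          simp [Nat.card_eq_fintype_card, ← pow_mul, ← sq]
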